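/- arXiv:1104.4039 — 6 statements merged into one kernel-verified Lean document; each statement's English description precedes it below -/
import Mathlib

section
/- Let N be a monotone Boolean automata network and x → y an elementary transition (∅ ≠ Δ(x,y) ⊆ U(x), where Δ is the set of differing coordinates). Suppose the digraph H = (Δ(x,y), FRUS(x) restricted to Δ(x,y)) is acyclic. Then the transition x → y is totally sequentialisable: there exists an ordering i_1, ..., i_m of Δ(x,y) such that each intermediate step is an asynchronous transition, i.e., setting x(0) = x and x(t+1) = x(t) with coordinate i_{t+1} flipped, for every t < m the automaton i_{t+1} is unstable in x(t). -/
namespace BAN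

/-- A configuration of a Boolean automata network of size `n`. -/
abbrev Config (n : ℕ) := Fin n → Bool

/-- `s(b) = 2b - 1 ∈ {-1,1}`. -/
def sgn (b : Bool) : ℤ := if b then 1 else -1

/-- Boolean as integer `0/1`. -/
def bint (b : Bool) : ℤ := if b then 1 else 0

/-- `x̄^i` : `x` with coordinate `i` flipped. -/
def flip {n : ℕ} (x : Config n) (i : Fin n) : Config n := Function.update x i (!x i)

/-- A Boolean automata network of size `n`: the family of local transition functions. -/
def Net (n : ℕ) := Fin n → Config n → Bool

/-- `f i` is positively (locally) monotone in coordinate `j`: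
`s(x_j)·(f_i(x) − f_i(x̄^j)) ≥ 0` for all `x`. -/
def posIn {n : ℕ} (f : Net n) (i j : Fin n) : Prop :=
  ∀ x : Config n, 0 ≤ sgn (x j) * (bint (f i x) - bint (f i (flip x j)))

/-- `f i` is negatively (locally) monotone in coordinate `j`. -/
def negIu {n : ℕ} (f : Net n) (i j : Fin n) : Prop :=
  ∀ x : Config n, sgn (x j) * (bint (f i x) - bint (f i (flip x j))) ≤ 0

/-- The network is (locally) monotone. -/
def MonotoneNet {n : ℕ} (f : Net n) : Prop := ∀ i j, posIn f i j ∨ negIu f i j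

/-- `(j,i)` is an arc of the interaction graph: `f i` depends on coordinate `j`. -/
def arc {n : ℕ} (f : Net n) (j i : Fin n) : Prop := ∃ x, f i x ≠ f i (flip x j)

/-- The arc `(j,i)` exists and has sign `s` (`+1` or `-1`). -/
def hasSign {n : ℕ} (f : Net n) (j i : Fin n) (s : ℤ) : Prop :=
  arc f j i ∧ ((s = 1 ∧ posIn f i j) ∨ (s = -1 ∧ negIu f i j))

/-- Automaton `i` is unstable in `x`. -/
def unstable {n : ℕ} (f : Net n) (x : Config n) (i : Fin n) : Prop := f i x ≠ x i

/-- The arc `(j,i)` is frustrated in configuration `x`: `s(x_j)·s(x_i) = − sign(j,i)`. -/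
def frustrated {n : ℕ} (f : Net n) (x : Config n) (j i : Fin n) : Prop :=
  ∃ s : ℤ, hasSign f j i s ∧ sgn (x j) * sgn (x i) = -s

/-- `Δ(x,y)`: the set of coordinates where `x` and `y` differ. -/
def diff {n : ℕ} (x y : Config n) : Finset (Fin n) :=
  Finset.univ.filter fun i => x i ≠ y i

/-- `U(x)`: the set of unstable automata of `x`. -/
def U {n : ℕ} (f : Net n) (x : Config n) : Finset (Fin n) :=
  Finset.univ.filter fun i => f i x ≠ x i

/-- Elementary transition `x → y`: `∅ ≠ Δ(x,y) ⊆ U(x)`. -/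
def elemTrans {n : ℕ} (f : Net n) (x y : Config n) : Prop :=
  (diff x y).Nonempty ∧ diff x y ⊆ U f x

/-- Asynchronous (atomic) transition: flip one unstable coordinate. -/
def asyncStep {n : ℕ} (f : Net n) (x y : Config n) : Prop :=
  ∃ i, unstable f x i ∧ y = flip x i

/-- Asynchronous reachability (derivations). -/
def asyncReach {n : ℕ} (f : Net n) : Config n → Config n → Prop :=
  Relation.ReflTransGen (asyncStep f)

/-- `x ⇒ y` is sequentialisable: there is a chain of strictly smaller elementary
transitions from `x` to `y`. -/
def seqable {n : ℕ} (f : Net n) (x y : Config n) : Prop :=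
  ∃ l : List (Config n),
    l.Chain' (fun u v => elemTrans f u v ∧ (diff u v).card < (diff x y).card) ∧
    l.head? = some x ∧ l.getLast? = some y

/-- Non-sequentialisable (normal) synchronous transition. -/
def nonSeq {n : ℕ} (f : Net n) (x y : Config n) : Prop :=
  elemTrans f x y ∧ 2 ≤ (diff x y).card ∧ ¬ seqable f x y

/-- Cyclic successor on `Fin ℓ`. -/
def cnext {ℓ : ℕ} (k : Fin ℓ) : Fin ℓ := ⟨(k.val + 1) % ℓ, Nat.mod_lt _ k.pos⟩

/-- `c : Fin ℓ → Fin n` describes a cycle of the interaction graph of `f`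
(a closed walk with pairwise distinct arcs). -/
def isCycle {n : ℕ} (f : Net n) {ℓ : ℕ} (c : Fin ℓ → Fin n) : Prop :=
  0 < ℓ ∧ (∀ k, arc f (c k) (c (cnext k))) ∧
    Function.Injective (fun k => (c k, c (cnext k)))

/-- The cycle `c` is `x`-critical: all nodes unstable in `x`, all arcs frustrated in `x`. -/
def xCriticalCycle {n : ℕ} (f : Net n) (x : Config n) {ℓ : ℕ} (c : Fin ℓ → Fin n) : Prop :=
  isCycle f c ∧ (∀ k, unstable f x (c k)) ∧ ∀ k, frustrated f x (c k) (c (cnext k))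

/-- `x̄^S`: flip all coordinates of `x` in `S`. -/
def flipSet {n : ℕ} (x : Config n) (S : Finset (Fin n)) : Config n :=
  fun i => if i ∈ S then !x i else x i

/-- `x̄^V`. -/
def flipAll {n : ℕ} (x : Config n) : Config n := fun i => !x i

/-- Union of the first `t` blocks of a list of finsets. -/
def prefUnion {n : ℕ} (D : List (Finset (Fin n))) (t : ℕ) : Finset (Fin n) :=
  (D.take t).foldr (· ∪ ·) ∅

/-- `x ⇒ y` is totally sequentialisable: some ordering of `Δ(x,y)` gives a chain of
asynchronous transitions from `x` to `y`. -/
def totallySeq {n : ℕ} (f : Net n) (x y : Config n) : Prop :=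
  ∃ l : List (Fin n), l.Nodup ∧ l.toFinset = diff x y ∧
    ∀ t : Fin l.length, unstable f ((l.take t.val).foldl flip x) (l.get t)

/-- Attractor of the asynchronous transition graph: nonempty, closed, strongly
connected set of configurations (terminal SCC). -/
def isAttractor {n : ℕ} (f : Net n) (A : Set (Config n)) : Prop :=
  A.Nonempty ∧ (∀ a ∈ A, ∀ b, asyncStep f a b → b ∈ A) ∧
    ∀ a ∈ A, ∀ b ∈ A, asyncReach f a b

/-- A configuration is transient if it belongs to no attractor. -/
def transientCfg {n : ℕ} (f : Net n) (z : Config n) : Prop :=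
  ¬ ∃ A : Set (Config n), isAttractor f A ∧ z ∈ A

/-! ### Auxiliary lemmas for Statement 5 -/

lemma flip_apply_ne' {n : ℕ} (x : Config n) (j i : Fin n) (h : i ≠ j) :
    flip x j i = x i := by
  simp [flip, Function.update_of_ne h]

lemma foldl_flip_not_mem {n : ℕ} :
    ∀ (L : List (Fin n)) (x : Config n) (i : Fin n), i ∉ L →
      (L.foldl flip x) i = x i := by
  intro L
  induction L with
  | nil => simp
  | cons j L ih =>
    intro x i hi
    simp only [List.mem_cons, not_or] at hi
    rw [List.foldl_cons, ih _ _ hi.2, flip_apply_ne' _ _ _ hi.1]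

lemma sgn_mul_cases (a b : Bool) : sgn a * sgn b = 1 ∨ sgn a * sgn b = -1 := by
  cases a <;> cases b <;> simp [sgn]

/-- If the arc `(j,i)` is not frustrated in `x`, then flipping coordinate `j`
(from its `x`-value) preserves the fact that `f i` disagrees with `x i`. -/
lemma safe_of_not_frustrated {n : ℕ} (f : Net n) (hmono : MonotoneNet f)
    (x : Config n) (j i : Fin n) (hnf : ¬ frustrated f x j i)
    (z : Config n) (hzj : z j = x j) (h : f i z ≠ x i) :
    f i (flip z j) ≠ x i := by
  by_cases harc : arc f j i
  · rcases hmono i j with hp | hn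
    · have hs : hasSign f j i 1 := ⟨harc, Or.inl ⟨rfl, hp⟩⟩
      have hprod : sgn (x j) * sgn (x i) = 1 := by
        rcases sgn_mul_cases (x j) (x i) with h1 | h1
        · exact h1
        · exact absurd ⟨1, hs, by rw [h1]⟩ hnf
      have hxji : x j = x i := by
        cases hxj : x j <;> cases hxi : x i <;> simp [hxj, hxi, sgn] at hprod ⊢
      have hp' := hp z
      cases hxi : x i <;> cases hfz : f i z <;> cases hfl : f i (flip z j) <;>
        simp_all [sgn, bint]
    · have hs : hasSign f j i (-1) := ⟨harc, Or.inr ⟨rfl, hn⟩⟩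
      have hprod : sgn (x j) * sgn (x i) = -1 := by
        rcases sgn_mul_cases (x j) (x i) with h1 | h1
        · exact absurd ⟨-1, hs, by rw [h1]; ring⟩ hnf
        · exact h1
      have hxji : x j ≠ x i := by
        cases hxj : x j <;> cases hxi : x i <;> simp [hxj, hxi, sgn] at hprod ⊢
      have hn' := hn z
      cases hxi : x i <;> cases hfz : f i z <;> cases hfl : f i (flip z j) <;>
        simp_all [sgn, bint]
  · simp only [arc, not_exists, ne_eq, not_not] at harc
    rw [← harc z]
    exact h

/-- Flipping a list of "safe" coordinates keeps `i` unstable (relative to the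
fixed value `x i`). -/
lemma keep_unstable {n : ℕ} (f : Net n) (i : Fin n) :
    ∀ (L : List (Fin n)) (x : Config n), i ∉ L → L.Nodup →
    (∀ j ∈ L, ∀ z : Config n, z j = x j → f i z ≠ x i → f i (flip z j) ≠ x i) →
    f i x ≠ x i → f i (L.foldl flip x) ≠ x i := by
  intro L
  induction L with
  | nil => intro x _ _ _ h; simpa using h
  | cons j L ih =>
    intro x hi hnd hsafe h
    have hij : i ≠ j := by rintro rfl; exact hi List.mem_cons_self
    have hji : i ∉ L := fun hm => hi (List.mem_cons_of_mem _ hm)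
    have hjL : j ∉ L := (List.nodup_cons.mp hnd).1
    have hx'i : flip x j i = x i := flip_apply_ne' x j i hij
    have h1 : f i (flip x j) ≠ x i := hsafe j List.mem_cons_self x rfl h
    have hres := ih (flip x j) hji (List.nodup_cons.mp hnd).2 ?_ (by rw [hx'i]; exact h1)
    · rw [List.foldl_cons, ← hx'i]
      exact hres
    · intro j' hj' z hzj' hne
      have hj'j : j' ≠ j := fun hh => hjL (hh ▸ hj')
      have e1 : flip x j j' = x j' := flip_apply_ne' x j j' hj'j
      rw [hx'i] at hne ⊢
      exact hsafe j' (List.mem_cons_of_mem _ hj') z (by rw [hzj', e1]) hne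

/-- Reverse topological sort of a finite set w.r.t. an acyclic relation. -/
lemma topo_sort {α : Type*} [DecidableEq α] (r : α → α → Prop)
    (hwf : WellFounded (fun a b => Relation.TransGen r b a)) (S : Finset α) :
    ∃ l : List α, l.Nodup ∧ l.toFinset = S ∧ l.Pairwise (fun a b => ¬ r a b) := by
  induction S using Finset.strongInduction with
  | _ S ih =>
    rcases S.eq_empty_or_nonempty with rfl | hne
    · exact ⟨[], by simp, by simp, by simp⟩
    · obtain ⟨m, hm, hmin⟩ := hwf.has_min (↑S) (by exact_mod_cast hne)
      have hm' : m ∈ S := hm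
      obtain ⟨l, hnd, htf, hpw⟩ := ih (S.erase m) (Finset.erase_ssubset hm')
      refine ⟨m :: l, ?_, ?_, ?_⟩
      · rw [List.nodup_cons]
        refine ⟨fun hml => ?_, hnd⟩
        have : m ∈ S.erase m := htf ▸ List.mem_toFinset.mpr hml
        exact (Finset.notMem_erase m S) this
      · rw [List.toFinset_cons, htf, Finset.insert_erase hm']
      · rw [List.pairwise_cons]
        refine ⟨fun b hb hr => ?_, hpw⟩
        have hbS : b ∈ S := Finset.mem_of_mem_erase (htf ▸ List.mem_toFinset.mpr hb)
        exact hmin b hbS (Relation.TransGen.single hr)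

/-- an elementary transition whose frustration digraph on `Δ(x,y)`
is acyclic is totally sequentialisable. -/
theorem stmt5 {n : ℕ} (f : Net n) (hmono : MonotoneNet f) (x y : Config n)
    (ht : elemTrans f x y)
    (hacyc : ∀ i : Fin n, ¬ Relation.TransGen
      (fun j i' => j ∈ diff x y ∧ i' ∈ diff x y ∧ frustrated f x j i') i i) :
    totallySeq f x y := by
  classical
  set rel : Fin n → Fin n → Prop :=
    fun j i' => j ∈ diff x y ∧ i' ∈ diff x y ∧ frustrated f x j i' with hrel
  -- well-foundedness of the reversed transitive closure
  have hwf : WellFounded (fun a b => Relation.TransGen rel b a) := by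
    haveI : IsTrans (Fin n) (fun a b => Relation.TransGen rel b a) :=
      ⟨fun a b c h1 h2 => h2.trans h1⟩
    haveI : IsIrrefl (Fin n) (fun a b => Relation.TransGen rel b a) :=
      ⟨fun a h => hacyc a h⟩
    exact Finite.wellFounded_of_trans_of_irrefl _
  obtain ⟨l, hnd, htf, hpw⟩ := topo_sort rel hwf (diff x y)
  refine ⟨l, hnd, htf, ?_⟩
  intro t
  set i := l.get t with hi
  have hiΔ : i ∈ diff x y := htf ▸ List.mem_toFinset.mpr (l.get_mem t)
  have hiU : f i x ≠ x i := by
    have := ht.2 hiΔ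
    simpa [U] using this
  set L := l.take t.1 with hL
  have hsplit : L ++ l.drop t.1 = l := List.take_append_drop _ _
  have higet : i = l[t.1] := by simp [hi]
  have hidrop : i ∈ l.drop t.1 := by
    have h0 : 0 < (l.drop t.1).length := by simp
    have e : (l.drop t.1)[0] = l[t.1] := by simp
    rw [higet, ← e]
    exact List.getElem_mem h0
  have hnd2 : (L ++ l.drop t.1).Nodup := by rw [hsplit]; exact hnd
  have hiL : i ∉ L := fun hm => (List.nodup_append'.mp hnd2).2.2 hm hidrop
  have hpw2 : (L ++ l.drop t.1).Pairwise (fun a b => ¬ rel a b) := by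
    rw [hsplit]; exact hpw
  have hLnd : L.Nodup := (List.take_sublist _ _).nodup hnd
  have hsafe : ∀ j ∈ L, ∀ z : Config n, z j = x j → f i z ≠ x i →
      f i (flip z j) ≠ x i := by
    intro j hj z hzj hne
    have hjΔ : j ∈ diff x y :=
      htf ▸ List.mem_toFinset.mpr ((List.take_sublist _ _).subset hj)
    have hnr : ¬ rel j i := (List.pairwise_append.mp hpw2).2.2 j hj i hidrop
    have hnf : ¬ frustrated f x j i := fun hf => hnr ⟨hjΔ, hiΔ, hf⟩
    exact safe_of_not_frustrated f hmono x j i hnf z hzj hne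
  have hkeep := keep_unstable f i L x hiL hLnd hsafe hiU
  have hfix : (L.foldl flip x) i = x i := foldl_flip_not_mem L x i hiL
  unfold unstable
  rw [hfix]
  exact hkeep

end BAN
end

section
/- Let N be a monotone Boolean automata network such that every x-critical cycle (for any configuration x) has node set equal to the whole node set V. If x ⇒ y is a non-sequentialisable synchronous transition of N, then Δ(x,y) = V (equivalently y = x̄^V and U(x) = V). -/
namespace BAN

lemma mem_diff_iff {n : ℕ} {x y : Config n} {i : Fin n} : i ∈ diff x y ↔ x i ≠ y i := by
  simp [diff]

lemma mem_U_iff {n : ℕ} {f : Net n} {x : Config n} {i : Fin n} : i ∈ U f x ↔ f i x ≠ x i := by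
  simp [U]

lemma flip_apply {n : ℕ} (x : Config n) (j i : Fin n) :
    flip x j i = if i = j then !x j else x i := by
  simp [flip, Function.update_apply]

lemma diff_flip_self {n : ℕ} (x : Config n) (j : Fin n) : diff x (flip x j) = {j} := by
  ext i
  by_cases h : i = j <;> simp [mem_diff_iff, flip_apply, h]

lemma diff_flip_left {n : ℕ} {x y : Config n} {j : Fin n} (hj : x j ≠ y j) :
    diff (flip x j) y = (diff x y).erase j := by
  ext i
  by_cases h : i = j
  · subst h
    have : y i = !x i := by cases hx : x i <;> cases hy : y i <;> simp_all
    simp [mem_diff_iff, flip_apply, this]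
  · simp [mem_diff_iff, flip_apply, h, Finset.mem_erase]

lemma frus_of {n : ℕ} (f : Net n) (hm : MonotoneNet f) (x : Config n) (j i : Fin n)
    (h1 : f i x ≠ x i) (h2 : f i (flip x j) = x i) : frustrated f x j i := by
  have hfx : f i x = !(x i) := by cases hx : x i <;> cases hf : f i x <;> simp_all
  have harc : arc f j i := ⟨x, by rw [h2, hfx]; cases x i <;> simp⟩
  rcases hm i j with hp | hn
  · refine ⟨1, ⟨harc, Or.inl ⟨rfl, hp⟩⟩, ?_⟩
    have h := hp x
    rw [hfx, h2] at h
    cases hxj : x j <;> cases hxi : x i <;> rw [hxj, hxi] at h <;>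
      simp [sgn, bint] at h ⊢
  · refine ⟨-1, ⟨harc, Or.inr ⟨rfl, hn⟩⟩, ?_⟩
    have h := hn x
    rw [hfx, h2] at h
    cases hxj : x j <;> cases hxi : x i <;> rw [hxj, hxi] at h <;>
      simp [sgn, bint] at h ⊢

/-- if every critical cycle of `N` has node set `V`, then any
non-sequentialisable transition `x ⇒ y` satisfies `Δ(x,y) = V`. -/
theorem stmt7 {n : ℕ} (f : Net n) (hmono : MonotoneNet f)
    (hcrit : ∀ (z : Config n) (ℓ : ℕ) (c : Fin ℓ → Fin n),
      xCriticalCycle f z c → ∀ i : Fin n, ∃ k, c k = i)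
    (x y : Config n) (hns : nonSeq f x y) :
    diff x y = Finset.univ := by
  obtain ⟨⟨hne, hsub⟩, hcard, hnseq⟩ := hns
  set Δ := diff x y with hΔ
  -- key step: every j ∈ Δ has a frustrated out-arc to some i ∈ Δ
  have key : ∀ j ∈ Δ, ∃ i ∈ Δ, i ≠ j ∧ frustrated f x j i := by
    intro j hj
    by_contra hcon
    push_neg at hcon
    -- show the two-step sequentialisation exists, contradiction
    apply hnseq
    have hxyj : x j ≠ y j := mem_diff_iff.mp hj
    have hjU : f j x ≠ x j := mem_U_iff.mp (hsub hj)
    have hd1 : diff x (flip x j) = {j} := diff_flip_self x j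
    have hd2 : diff (flip x j) y = Δ.erase j := diff_flip_left hxyj
    have hcard2 : (Δ.erase j).card = Δ.card - 1 := Finset.card_erase_of_mem hj
    refine ⟨[x, flip x j, y], ?_, rfl, rfl⟩
    refine List.isChain_cons_cons.mpr ⟨⟨⟨?_, ?_⟩, ?_⟩, List.isChain_cons_cons.mpr ⟨⟨⟨?_, ?_⟩, ?_⟩, List.isChain_singleton _⟩⟩
    · rw [hd1]; exact ⟨j, Finset.mem_singleton_self j⟩
    · rw [hd1]; intro i hi
      rw [Finset.mem_singleton] at hi; subst hi
      exact mem_U_iff.mpr hjU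
    · rw [hd1]; exact lt_of_lt_of_le (by simp) hcard
    · rw [hd2]; rw [← Finset.card_pos, hcard2]; omega
    · rw [hd2]; intro i hi
      rw [Finset.mem_erase] at hi
      obtain ⟨hij, hiΔ⟩ := hi
      rw [mem_U_iff]
      have hfix : flip x j i = x i := by rw [flip_apply]; simp [hij]
      rw [hfix]
      intro hstable
      exact hcon i hiΔ hij (frus_of f hmono x j i (mem_U_iff.mp (hsub hiΔ)) hstable)
    · rw [hd2, hcard2, ← hΔ]; omega
  -- choice function
  have key2 : ∀ j : Fin n, ∃ i : Fin n, j ∈ Δ → i ∈ Δ ∧ i ≠ j ∧ frustrated f x j i := by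
    intro j
    by_cases hj : j ∈ Δ
    · obtain ⟨i, hi1, hi2, hi3⟩ := key j hj
      exact ⟨i, fun _ => ⟨hi1, hi2, hi3⟩⟩
    · exact ⟨j, fun h => absurd h hj⟩
  choose g hg using key2
  obtain ⟨j0, hj0⟩ := hne
  have hmem : ∀ t : ℕ, g^[t] j0 ∈ Δ := by
    intro t
    induction t with
    | zero => exact hj0
    | succ t ih => rw [Function.iterate_succ_apply']; exact (hg _ ih).1
  -- find a periodic point
  obtain ⟨p, q, hpq, heq⟩ : ∃ p q : ℕ, p < q ∧ g^[p] j0 = g^[q] j0 := by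
    obtain ⟨a, b, hab, he⟩ := Finite.exists_ne_map_eq_of_infinite (fun t : ℕ => g^[t] j0)
    rcases lt_or_gt_of_ne hab with h | h
    · exact ⟨a, b, h, he⟩
    · exact ⟨b, a, h, he.symm⟩
  set z := g^[p] j0 with hz
  have hper : g^[q - p] z = z := by
    rw [hz, ← Function.iterate_add_apply]
    have h' : q - p + p = q := by omega
    rw [h']
    exact heq.symm
  have hPex : ∃ m, 0 < m ∧ g^[m] z = z := ⟨q - p, by omega, hper⟩
  set ℓ := Nat.find hPex with hℓ
  obtain ⟨hℓpos, hℓz⟩ := Nat.find_spec hPex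
  have hmin : ∀ m, 0 < m → m < ℓ → g^[m] z ≠ z := by
    intro m hm hmℓ
    have := Nat.find_min hPex hmℓ
    intro hc; exact this ⟨hm, hc⟩
  have hzmem : ∀ t : ℕ, g^[t] z ∈ Δ := by
    intro t
    rw [hz, ← Function.iterate_add_apply]
    exact hmem _
  set c : Fin ℓ → Fin n := fun k => g^[k.val] z with hc
  have hcinj : Function.Injective c := by
    intro a b hab
    by_contra hne'
    have key3 : ∀ (a b : Fin ℓ), a.val < b.val → g^[a.val] z = g^[b.val] z → False := by
      intro a b h hab
      have h1 : g^[(ℓ - b.val) + a.val] z = z := by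
        rw [Function.iterate_add_apply, hab, ← Function.iterate_add_apply]
        have hb : ℓ - b.val + b.val = ℓ := by omega
        rw [hb, hℓz]
      have hb2 : b.val < ℓ := b.isLt
      exact hmin _ (by omega) (by omega) h1
    rcases lt_trichotomy a.val b.val with h | h | h
    · exact key3 a b h hab
    · exact hne' (Fin.ext h)
    · exact key3 b a h hab.symm
  have hstep : ∀ k : Fin ℓ, c (cnext k) = g (c k) := by
    intro k
    have hk : k.val < ℓ := k.isLt
    simp only [hc, cnext]
    rcases Nat.lt_or_ge (k.val + 1) ℓ with h | h
    · rw [Nat.mod_eq_of_lt h, Function.iterate_succ_apply']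
    · have hkeq : k.val + 1 = ℓ := by omega
      rw [hkeq, Nat.mod_self]
      simp only [Function.iterate_zero_apply]
      have h2 : g (g^[k.val] z) = g^[k.val + 1] z := (Function.iterate_succ_apply' g _ z).symm
      rw [h2, hkeq]
      exact hℓz.symm
  have hcmem : ∀ k, c k ∈ Δ := fun k => hzmem _
  have hcrit' : xCriticalCycle f x c := by
    refine ⟨⟨hℓpos, ?_, ?_⟩, ?_, ?_⟩
    · intro k
      rw [hstep k]
      obtain ⟨s, hs, _⟩ := (hg (c k) (hcmem k)).2.2
      exact hs.1
    · intro a b hab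
      simp only [Prod.mk.injEq] at hab
      exact hcinj hab.1
    · intro k
      exact mem_U_iff.mp (hsub (hcmem k))
    · intro k
      rw [hstep k]
      exact (hg (c k) (hcmem k)).2.2
  have hall := hcrit x ℓ c hcrit'
  apply Finset.eq_univ_iff_forall.mpr
  intro i
  obtain ⟨k, hk⟩ := hall i
  rw [← hk]
  exact hcmem k

end BAN
end

section
/- Let N be a monotone Boolean automata network of size n whose x-critical cycles all have node set V (the full node set). If x ⇒ y and x' ⇒ y' are two non-sequentialisable transitions of N, then either (x', y') = (x, y) or (x', y') = (y, x). In other words, N has at most two non-sequentialisable transitions, and they are mutually reverse. -/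
namespace BAN

/-! ### Auxiliary lemmas for `stmt8` -/

section Aux

variable {n : ℕ}

lemma flipSet_empty (x : Config n) : flipSet x ∅ = x := by
  funext k; simp [flipSet]

lemma flipSet_insert (x : Config n) (S : Finset (Fin n)) (j : Fin n) (hj : j ∉ S) :
    flipSet x (insert j S) = flip (flipSet x S) j := by
  funext k
  by_cases hk : k = j
  · subst hk; simp [flipSet, flip, Function.update, hj]
  · simp [flipSet, flip, Function.update, hk, Finset.mem_insert]

lemma flipSet_notmem (x : Config n) (S : Finset (Fin n)) (i : Fin n) (h : i ∉ S) :
    flipSet x S i = x i := by simp [flipSet, h]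

lemma diff_flip (w : Config n) (i : Fin n) : diff w (flip w i) = {i} := by
  ext k
  by_cases hk : k = i
  · subst hk; simp [diff, flip, Function.update]
  · simp [diff, flip, Function.update, hk]

lemma unstable_iff {f : Net n} {x : Config n} {i : Fin n} :
    unstable f x i ↔ f i x = !x i := by
  unfold unstable
  cases h : f i x <;> cases h2 : x i <;> simp_all

lemma flipSet_diff {x y : Config n} : flipSet x (diff x y) = y := by
  funext k
  by_cases hk : x k = y k
  · rw [flipSet_notmem]
    · exact hk
    · simp [diff, hk]
  · have : k ∈ diff x y := by simp [diff, hk]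
    simp only [flipSet, if_pos this]
    cases h : x k <;> cases h2 : y k <;> simp_all

lemma stayUnstable {f : Net n} (hmono : MonotoneNet f) (x : Config n) (i : Fin n)
    (S : Finset (Fin n)) (hiS : i ∉ S) (hfi : f i x = !x i)
    (hS : ∀ j ∈ S, ¬ frustrated f x j i) : f i (flipSet x S) = !x i := by
  classical
  induction S using Finset.induction_on with
  | empty => rw [flipSet_empty]; exact hfi
  | @insert j S hjS ih =>
    have hiS' : i ∉ S := fun h => hiS (Finset.mem_insert_of_mem h)
    have hw : f i (flipSet x S) = !x i :=
      ih hiS' (fun j hj => hS j (Finset.mem_insert_of_mem hj))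
    rw [flipSet_insert x S j hjS]
    set w := flipSet x S with hwdef
    by_contra hne
    have hval : f i (flip w j) = x i := by
      cases h : f i (flip w j) <;> cases h2 : x i <;> simp_all
    have harc : arc f j i := ⟨w, by rw [hw, hval]; cases x i <;> simp⟩
    have hwj : w j = x j := flipSet_notmem x S j hjS
    have hnfr := hS j (Finset.mem_insert_self j S)
    have hpm : sgn (x j) * sgn (x i) = 1 ∨ sgn (x j) * sgn (x i) = -1 := by
      cases x j <;> cases x i <;> simp [sgn]
    rcases hmono i j with hp | hn
    · have hsx : sgn (x j) * sgn (x i) = 1 :=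
        hpm.resolve_right (fun h => hnfr ⟨1, ⟨harc, Or.inl ⟨rfl, hp⟩⟩, by simpa using h⟩)
      have := hp w
      rw [hw, hval, hwj] at this
      cases hxj : x j <;> cases hxi : x i <;> simp_all [sgn, bint]
    · have hsx : sgn (x j) * sgn (x i) = -1 :=
        hpm.resolve_left (fun h => hnfr ⟨-1, ⟨harc, Or.inr ⟨rfl, hn⟩⟩, by simpa using h⟩)
      have := hn w
      rw [hw, hval, hwj] at this
      cases hxj : x j <;> cases hxi : x i <;> simp_all [sgn, bint]

lemma cycleLemma (r : Fin n → Fin n → Prop) (S : Finset (Fin n)) (hS : S.Nonempty)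
    (h : ∀ i ∈ S, ∃ j ∈ S, r j i) :
    ∃ (ℓ : ℕ) (c : Fin ℓ → Fin n), 0 < ℓ ∧ Function.Injective c ∧ (∀ k, c k ∈ S) ∧
      ∀ k, r (c k) (c (cnext k)) := by
  classical
  let α := {i : Fin n // i ∈ S}
  have hne : Nonempty α := ⟨⟨hS.choose, hS.choose_spec⟩⟩
  let g : α → α := fun a => ⟨(h a.1 a.2).choose, (h a.1 a.2).choose_spec.1⟩
  have hg : ∀ a : α, r (g a).1 a.1 := fun a => (h a.1 a.2).choose_spec.2
  obtain ⟨a0⟩ := hne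
  have hpq : ∃ p q : ℕ, p < q ∧ g^[p] a0 = g^[q] a0 := by
    have hfin : ¬ Function.Injective (fun k : Fin (Fintype.card α + 1) => g^[k.val] a0) := by
      intro hinj
      have := Fintype.card_le_of_injective _ hinj
      simp at this
    rw [Function.not_injective_iff] at hfin
    obtain ⟨a, b, hab, hne2⟩ := hfin
    rcases Nat.lt_or_ge a.val b.val with hlt | hge
    · exact ⟨a.val, b.val, hlt, hab⟩
    · have : b.val < a.val := lt_of_le_of_ne hge (by
        intro hh; exact hne2 (Fin.ext hh.symm))
      exact ⟨b.val, a.val, this, hab.symm⟩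
  obtain ⟨z, hper⟩ : ∃ z : α, ∃ m, 0 < m ∧ g^[m] z = z := by
    obtain ⟨p, q, hlt, heq⟩ := hpq
    refine ⟨g^[p] a0, q - p, by omega, ?_⟩
    rw [← Function.iterate_add_apply, show q - p + p = q by omega]
    exact heq.symm
  set ℓ := Nat.find hper with hℓdef
  obtain ⟨hℓpos, hℓz⟩ := Nat.find_spec hper
  have hdist : ∀ a b : ℕ, a < ℓ → b < ℓ → g^[a] z = g^[b] z → a = b := by
    have key : ∀ a b : ℕ, a < b → b < ℓ → g^[a] z = g^[b] z → False := by
      intro a b hab hbl he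
      have h1 : g^[ℓ - b + a] z = z := by
        have h2 : g^[ℓ - b] (g^[a] z) = g^[ℓ - b] (g^[b] z) := by rw [he]
        rw [← Function.iterate_add_apply, ← Function.iterate_add_apply] at h2
        rw [show ℓ - b + b = ℓ by omega] at h2
        rw [h2, hℓz]
      have := Nat.find_min hper (m := ℓ - b + a) (by omega)
      exact this ⟨by omega, h1⟩
    intro a b ha hb he
    rcases Nat.lt_trichotomy a b with h1 | h1 | h1
    · exact absurd (key a b h1 hb he) (by simp)
    · exact h1
    · exact absurd (key b a h1 ha he.symm) (by simp)
  refine ⟨ℓ, fun k => (g^[ℓ - k.val] z).1, hℓpos, ?_, fun k => (g^[ℓ - k.val] z).2, ?_⟩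
  · intro k k' hkk
    have hval : g^[ℓ - k.val] z = g^[ℓ - k'.val] z := Subtype.ext hkk
    have hmod : ∀ e : ℕ, 0 < e → e ≤ ℓ → g^[e] z = g^[e % ℓ] z := by
      intro e he hel
      rcases eq_or_lt_of_le hel with hh | hh
      · subst hh; simp only [Nat.mod_self, Function.iterate_zero, id_eq]; exact hℓz
      · rw [Nat.mod_eq_of_lt hh]
    have h1 : g^[(ℓ - k.val) % ℓ] z = g^[(ℓ - k'.val) % ℓ] z := by
      rw [← hmod _ (by omega) (by omega), ← hmod _ (by omega) (by omega)]
      exact hval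
    have h2 := hdist _ _ (Nat.mod_lt _ hℓpos) (Nat.mod_lt _ hℓpos) h1
    have hk := k.isLt; have hk' := k'.isLt
    apply Fin.ext
    have hm : ∀ a : ℕ, a < ℓ → (ℓ - a) % ℓ = if a = 0 then 0 else ℓ - a := by
      intro a ha
      rcases Nat.eq_zero_or_pos a with h0 | h0
      · simp [h0, Nat.mod_self]
      · rw [Nat.mod_eq_of_lt (by omega), if_neg (by omega)]
    rw [hm _ hk, hm _ hk'] at h2
    split_ifs at h2 <;> omega
  · intro k
    show r (g^[ℓ - k.val] z).1 (g^[ℓ - ((k.val + 1) % ℓ)] z).1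
    rcases Nat.lt_or_ge (k.val + 1) ℓ with hlt | hge
    · rw [Nat.mod_eq_of_lt hlt]
      have h3 : g^[ℓ - k.val] z = g (g^[ℓ - (k.val + 1)] z) := by
        rw [← Function.iterate_succ_apply' g]
        congr 1; omega
      rw [h3]
      exact hg _
    · have hk := k.isLt
      rw [show k.val + 1 = ℓ by omega, Nat.mod_self, Nat.sub_zero, hℓz,
        show ℓ - k.val = 1 by omega]
      simpa using hg z

lemma critLemma {f : Net n} (x : Config n)
    (hcrit : ∀ (z : Config n) (ℓ : ℕ) (c : Fin ℓ → Fin n),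
      xCriticalCycle f z c → ∀ i : Fin n, ∃ k, c k = i)
    (S : Finset (Fin n)) (hne : S.Nonempty)
    (hunst : ∀ i ∈ S, unstable f x i)
    (hfr : ∀ i ∈ S, ∃ j ∈ S, frustrated f x j i) : S = Finset.univ := by
  obtain ⟨ℓ, c, hpos, hinj, hmem, harc⟩ := cycleLemma (frustrated f x) S hne hfr
  have hcyc : xCriticalCycle f x c := by
    refine ⟨⟨hpos, fun k => ?_, fun a b hab => hinj (congrArg Prod.fst hab)⟩,
      fun k => hunst _ (hmem k), fun k => harc k⟩
    obtain ⟨s, ⟨ha, _⟩, _⟩ := harc k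
    exact ha
  rw [Finset.eq_univ_iff_forall]
  intro i
  obtain ⟨k, hk⟩ := hcrit x ℓ c hcyc i
  exact hk ▸ hmem k

lemma not_mem_take_self {α : Type*} (l : List α) (hnd : l.Nodup) (t : ℕ) (ht : t < l.length) :
    l[t] ∉ l.take t := by
  intro hmem
  rw [List.mem_take_iff_getElem] at hmem
  obtain ⟨s, hs, he⟩ := hmem
  have hst : s < t := by simp at hs; omega
  have := (hnd.getElem_inj_iff).1 he
  omega

lemma orderList (r : Fin n → Fin n → Prop) (Δ : Finset (Fin n))
    (H : ∀ T ⊆ Δ, T.Nonempty → ∃ i ∈ T, ∀ j ∈ T, ¬ r j i) :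
    ∀ (T : Finset (Fin n)), T ⊆ Δ → ∃ l : List (Fin n), l.Nodup ∧ l.toFinset = T ∧
      ∀ (t : ℕ) (ht : t < l.length), ∀ j ∈ l.take t, ¬ r j (l[t]'ht) := by
  classical
  intro T
  induction T using Finset.strongInduction with
  | _ T ih =>
    intro hTΔ
    rcases T.eq_empty_or_nonempty with rfl | hTne
    · exact ⟨[], by simp, by simp, by simp⟩
    · obtain ⟨i, hiT, hi⟩ := H T hTΔ hTne
      obtain ⟨l', hnd, htf, hp⟩ := ih (T.erase i) (Finset.erase_ssubset hiT)
        ((Finset.erase_subset _ _).trans hTΔ)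
      have hil' : i ∉ l' := by
        rw [← List.mem_toFinset, htf]
        simp
      refine ⟨l' ++ [i], ?_, ?_, ?_⟩
      · rw [List.nodup_append]
        exact ⟨hnd, List.nodup_singleton i, by intro a ha b hb hab; simp at hb; subst hb; subst hab; exact hil' ha⟩
      · rw [List.toFinset_append]
        rw [htf, List.toFinset_cons, List.toFinset_nil, LawfulSingleton.insert_empty_eq,
          Finset.union_comm, ← Finset.insert_eq, Finset.insert_erase hiT]
      · intro t ht j hj
        rcases Nat.lt_or_ge t l'.length with hlt | hge
        · rw [List.take_append_of_le_length (le_of_lt hlt)] at hj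
          rw [List.getElem_append_left hlt]
          exact hp t hlt j hj
        · have hteq : t = l'.length := by
            simp only [List.length_append, List.length_singleton] at ht
            omega
          subst hteq
          have hgi : (l' ++ [i])[l'.length]'ht = i := by
            simp [List.getElem_append_right]
          rw [hgi]
          rw [List.take_left] at hj
          have : j ∈ T := (Finset.erase_subset _ _) (htf ▸ List.mem_toFinset.2 hj)
          exact hi j this

lemma nonSeq_diff_univ {f : Net n} (hmono : MonotoneNet f)
    (hcrit : ∀ (z : Config n) (ℓ : ℕ) (c : Fin ℓ → Fin n),
      xCriticalCycle f z c → ∀ i : Fin n, ∃ k, c k = i)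
    {x y : Config n} (hns : nonSeq f x y) : diff x y = Finset.univ := by
  classical
  obtain ⟨⟨hΔne, hΔU⟩, hcard, hnseq⟩ := hns
  set Δ := diff x y with hΔdef
  have hunst : ∀ i ∈ Δ, unstable f x i := by
    intro i hi
    have := hΔU hi
    simpa [U, unstable] using this
  by_cases hH : ∃ T ⊆ Δ, T.Nonempty ∧ ∀ i ∈ T, ∃ j ∈ T, frustrated f x j i
  · obtain ⟨T, hTΔ, hTne, hT⟩ := hH
    have hTu := critLemma x hcrit T hTne (fun i hi => hunst i (hTΔ hi)) hT
    rw [Finset.eq_univ_iff_forall]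
    intro i
    exact hTΔ (hTu ▸ Finset.mem_univ i)
  · push_neg at hH
    exfalso
    apply hnseq
    have H : ∀ T ⊆ Δ, T.Nonempty → ∃ i ∈ T, ∀ j ∈ T, ¬ frustrated f x j i := by
      intro T hTΔ hTne
      obtain ⟨i, hiT, hi⟩ := hH T hTΔ hTne
      exact ⟨i, hiT, hi⟩
    obtain ⟨l, hnd, htf, hp⟩ := orderList (frustrated f x) Δ H Δ (le_refl _)
    set m := l.length with hm
    set Zf : Fin (m + 1) → Config n :=
      fun t => flipSet x ((l.take t.val).toFinset) with hZ
    have hZ0 : Zf 0 = x := by simp [hZ, flipSet_empty]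
    have hZlast : Zf (Fin.last m) = y := by
      simp only [hZ, Fin.last]
      rw [List.take_of_length_le (le_refl _), htf]
      exact flipSet_diff
    have hmemtake : ∀ (t : ℕ) (ht : t < m), (l[t]'ht) ∉ (l.take t).toFinset := by
      intro t ht hmem
      exact not_mem_take_self l hnd t ht (List.mem_toFinset.1 hmem)
    have hstep : ∀ (t : ℕ) (ht : t < m),
        Zf ⟨t + 1, by omega⟩ = flip (Zf ⟨t, by omega⟩) (l[t]'ht) := by
      intro t ht
      have htake : l.take (t + 1) = l.take t ++ [l[t]'ht] := by
        rw [List.take_succ]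
        simp [List.getElem?_eq_getElem ht]
      simp only [hZ]
      rw [← flipSet_insert _ _ _ (hmemtake t ht)]
      congr 1
      rw [htake, List.toFinset_append, List.toFinset_cons, List.toFinset_nil,
        LawfulSingleton.insert_empty_eq, Finset.union_comm, ← Finset.insert_eq]
    have hunst2 : ∀ (t : ℕ) (ht : t < m),
        unstable f (Zf ⟨t, by omega⟩) (l[t]'ht) := by
      intro t ht
      have hiΔ : (l[t]'ht) ∈ Δ := htf ▸ List.mem_toFinset.2 (l.getElem_mem ht)
      have hfi : f (l[t]'ht) x = !x (l[t]'ht) := unstable_iff.1 (hunst _ hiΔ)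
      have hfr : ∀ j ∈ (l.take t).toFinset, ¬ frustrated f x j (l[t]'ht) :=
        fun j hj => hp t ht j (List.mem_toFinset.1 hj)
      have h1 : f (l[t]'ht) (Zf ⟨t, by omega⟩) = !x (l[t]'ht) :=
        stayUnstable hmono x _ _ (hmemtake t ht) hfi hfr
      have h2 : Zf ⟨t, by omega⟩ (l[t]'ht) = x (l[t]'ht) :=
        flipSet_notmem _ _ _ (hmemtake t ht)
      rw [unstable_iff, h1, h2]
    refine ⟨List.ofFn Zf, ?_, ?_, ?_⟩
    · change List.IsChain _ _
      rw [List.isChain_iff_getElem]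
      intro t hlen
      simp only [List.length_ofFn] at hlen
      have ht : t < m := by omega
      have hg1 : (List.ofFn Zf).get ⟨t, by simp; omega⟩ = Zf ⟨t, by omega⟩ := by
        rw [List.get_eq_getElem]
        exact List.getElem_ofFn (f := Zf) (i := t) (by simp; omega)
      have hg2 : (List.ofFn Zf).get ⟨t + 1, by simp; omega⟩ = Zf ⟨t + 1, by omega⟩ := by
        rw [List.get_eq_getElem]
        exact List.getElem_ofFn (f := Zf) (i := t + 1) (by simp; omega)
      rw [List.get_eq_getElem] at hg1 hg2
      rw [hg1, hg2, hstep t ht]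
      have hdf : diff (Zf ⟨t, by omega⟩) (flip (Zf ⟨t, by omega⟩) (l[t]'ht)) = {l[t]'ht} :=
        diff_flip _ _
      refine ⟨⟨?_, ?_⟩, ?_⟩
      · rw [hdf]; exact Finset.singleton_nonempty _
      · rw [hdf]
        intro k hk
        rw [Finset.mem_singleton] at hk
        subst hk
        simpa [U, unstable] using hunst2 t ht
      · rw [hdf, ← hΔdef, Finset.card_singleton]
        omega
    · rw [List.ofFn_succ]
      simp only [List.head?_cons]
      rw [hZ0]
    · have h1 : (List.ofFn Zf) ≠ [] := by simp [← List.length_pos_iff]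
      rw [List.getLast?_eq_getLast h1, List.getLast_eq_getElem]
      simp only [List.getElem_ofFn]
      rw [← hZlast]
      exact congrArg (some ∘ Zf) (Fin.ext (by simp [Fin.last]))

lemma nonSeq_props {f : Net n} (hmono : MonotoneNet f)
    (hcrit : ∀ (z : Config n) (ℓ : ℕ) (c : Fin ℓ → Fin n),
      xCriticalCycle f z c → ∀ i : Fin n, ∃ k, c k = i)
    {x y : Config n} (hns : nonSeq f x y) :
    (∀ i, f i x = !x i) ∧ y = flipAll x := by
  have hdu := nonSeq_diff_univ hmono hcrit hns
  have hdiff : ∀ i : Fin n, x i ≠ y i := by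
    intro i
    have : i ∈ diff x y := hdu ▸ Finset.mem_univ i
    simpa [diff] using this
  constructor
  · intro i
    have : unstable f x i := by
      have := hns.1.2 (hdu ▸ Finset.mem_univ i)
      simpa [U, unstable] using this
    exact unstable_iff.1 this
  · funext i
    have := hdiff i
    cases h : x i <;> cases h2 : y i <;> simp_all [flipAll]

end Aux

/-- if every critical cycle of `N` has node set `V`, then `N` has at most
two non-sequentialisable transitions and they are mutually reverse. -/
theorem stmt8 {n : ℕ} (f : Net n) (hmono : MonotoneNet f)
    (hcrit : ∀ (z : Config n) (ℓ : ℕ) (c : Fin ℓ → Fin n),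
      xCriticalCycle f z c → ∀ i : Fin n, ∃ k, c k = i)
    (x y x' y' : Config n) (hns : nonSeq f x y) (hns' : nonSeq f x' y') :
    (x' = x ∧ y' = y) ∨ (x' = y ∧ y' = x) := by
  classical
  obtain ⟨hx1, hy⟩ := nonSeq_props hmono hcrit hns
  obtain ⟨hx'1, hy'⟩ := nonSeq_props hmono hcrit hns'
  set D := diff x x' with hDdef
  by_cases hD0 : D = ∅
  · left
    have hxx : x' = x := by
      funext i
      by_contra h
      have : i ∈ D := by
        simp only [hDdef, diff, Finset.mem_filter, Finset.mem_univ, true_and]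
        exact fun hh => h hh.symm
      rw [hD0] at this
      simp at this
    refine ⟨hxx, ?_⟩
    rw [hy', hxx, hy]
  by_cases hDu : D = Finset.univ
  · right
    have hxx : x' = y := by
      rw [hy]
      funext i
      have : i ∈ D := hDu ▸ Finset.mem_univ i
      have hne : x i ≠ x' i := by simpa [hDdef, diff] using this
      show x' i = !x i
      cases h : x i <;> cases h2 : x' i <;> simp_all
    refine ⟨hxx, ?_⟩
    rw [hy', hxx, hy]
    funext i
    simp [flipAll]
  exfalso
  have hne : D.Nonempty := Finset.nonempty_iff_ne_empty.2 hD0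
  have hkey : ∀ i ∈ D, ∃ j ∈ D, frustrated f x j i := by
    intro i hiD
    have hxne : x i ≠ x' i := by simpa [hDdef, diff] using hiD
    have hxi' : x' i = !x i := by
      cases h : x i <;> cases h2 : x' i <;> simp_all
    set S := D.erase i with hSdef
    have hiS : i ∉ S := Finset.notMem_erase i D
    have hxD : flipSet x D = x' := by
      funext k
      by_cases hk : k ∈ D
      · have : x k ≠ x' k := by simpa [hDdef, diff] using hk
        simp only [flipSet, if_pos hk]
        cases h : x k <;> cases h2 : x' k <;> simp_all
      · have : x k = x' k := by
          by_contra h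
          exact hk (by simp [hDdef, diff, h])
        simp only [flipSet, if_neg hk]
        exact this
    have hins : x' = flip (flipSet x S) i := by
      rw [← flipSet_insert _ _ _ hiS, hSdef, Finset.insert_erase hiD, hxD]
    set w := flipSet x S with hwdef
    by_cases hw : f i w = !x i
    · -- negative self-loop, frustrated in x
      have hfx'i : f i x' = x i := by rw [hx'1 i, hxi']; simp
      have hflipval : f i (flip w i) = x i := by rw [← hins]; exact hfx'i
      have hne2 : f i w ≠ f i (flip w i) := by
        rw [hw, hflipval]
        cases x i <;> simp
      have harc : arc f i i := ⟨w, hne2⟩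
      have hwi : w i = x i := flipSet_notmem _ _ _ hiS
      have hn : negIu f i i := by
        rcases hmono i i with hp | hn
        · exfalso
          have := hp w
          rw [hwi, hw, hflipval] at this
          cases hxi2 : x i <;> rw [hxi2] at this <;> simp [sgn, bint] at this
        · exact hn
      exact ⟨i, hiD, ⟨-1, ⟨harc, Or.inr ⟨rfl, hn⟩⟩, by cases x i <;> simp [sgn]⟩⟩
    · have hex : ¬ ∀ j ∈ S, ¬ frustrated f x j i :=
        fun hall => hw (stayUnstable hmono x i S hiS (hx1 i) hall)
      push_neg at hex
      obtain ⟨j, hjS, hj⟩ := hex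
      exact ⟨j, (Finset.erase_subset _ _) hjS, hj⟩
  have := critLemma x hcrit D hne
    (fun i _ => unstable_iff.2 (hx1 i)) hkey
  exact hDu this


end BAN
end

section
/- Consider the Boolean automata network N of size 4 with f_0(x) = x_2 ∨ (x_0 ∧ ¬x_1), f_1(x) = x_3 ∨ (¬x_0 ∧ x_1), f_2(x) = ¬x_0 ∧ x_1, f_3(x) = x_0 ∧ ¬x_1. Then: (a) the configuration 0000 is stable; (b) the set T = {x ∈ {0,1}^4 : x_0 ∨ x_1 = 1} is closed under asynchronous transitions (if x ∈ T and i ∈ U(x) then x̄^i ∈ T); (c) the transition 1100 ⇒ 0000 is a valid synchronous elementary transition (i.e., {0,1} ⊆ U(1100)); and therefore (d) 1100 ⇒ 0000 is non-sequentialisable, since 0000 ∉ T but 1100 ∈ T and all asynchronous derivations from 1100 stay in T. -/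
namespace BAN

instance {n : ℕ} (f : Net n) (x : Config n) (i : Fin n) : Decidable (unstable f x i) :=
  inferInstanceAs (Decidable (f i x ≠ x i))

instance {n : ℕ} (f : Net n) (x y : Config n) : Decidable (elemTrans f x y) :=
  inferInstanceAs (Decidable ((diff x y).Nonempty ∧ diff x y ⊆ U f x))

lemma asyncStep_of_elem_card_le_one {n : ℕ} {f : Net n} {x y : Config n}
    (h : elemTrans f x y) (hc : (diff x y).card ≤ 1) : asyncStep f x y := by
  obtain ⟨hne, hsub⟩ := h
  obtain ⟨i, hi⟩ := Finset.card_eq_one.mp (le_antisymm hc (Finset.one_le_card.mpr hne))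
  refine ⟨i, ?_, ?_⟩
  · have : i ∈ U f x := hsub (hi ▸ Finset.mem_singleton_self i)
    simpa [U, unstable] using this
  · funext j
    by_cases hj : j = i
    · subst hj
      have hmem : j ∈ diff x y := hi ▸ Finset.mem_singleton_self j
      have hxy : x j ≠ y j := by simpa [diff] using hmem
      simp only [flip, Function.update_self]
      cases h1 : x j <;> cases h2 : y j <;> simp_all
    · have hmem : j ∉ diff x y := by rw [hi]; simpa using hj
      have hxy : x j = y j := by simpa [diff] using hmem
      simp [flip, Function.update_of_ne hj, hxy]

lemma chain'_reach {α : Type*} {r : α → α → Prop} :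
    ∀ l : List α, l.Chain' r → ∀ x y, l.head? = some x → l.getLast? = some y →
      Relation.ReflTransGen r x y
  | [], _, x, y, hx, _ => by simp at hx
  | [a], _, x, y, hx, hy => by
      simp only [List.head?, List.getLast?, Option.some.injEq] at hx hy
      subst hx; rw [← hy]; exact Relation.ReflTransGen.refl
  | a :: c :: l, h, x, y, hx, hy => by
      simp only [List.head?, Option.some.injEq] at hx
      subst hx
      have h1 : r a c := (List.isChain_cons_cons.mp h).1
      have h2 := (List.isChain_cons_cons.mp h).2
      have hy' : (c :: l).getLast? = some y := by
        rwa [List.getLast?_cons_cons] at hy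
      exact Relation.ReflTransGen.head h1 (chain'_reach (c :: l) h2 c y rfl hy')

/-- the size-4 network of the paper's main example: `0000` is stable,
`T = {x : x_0 ∨ x_1 = 1}` is closed under asynchronous transitions, `1100 ⇒ 0000` is a
valid synchronous elementary transition, `0000` is not asynchronously reachable from
`1100`, and the transition is non-sequentialisable. -/
theorem stmt15 :
    let f : Net 4 := fun i x =>
      if i = 0 then x 2 || (x 0 && !(x 1))
      else if i = 1 then x 3 || (!(x 0) && x 1)
      else if i = 2 then !(x 0) && x 1
      else x 0 && !(x 1)
    let a : Config 4 := ![true, true, false, false]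
    let b : Config 4 := ![false, false, false, false]
    (∀ i, f i b = b i) ∧
    (∀ x : Config 4, (x 0 = true ∨ x 1 = true) → ∀ i, unstable f x i →
      ((flip x i) 0 = true ∨ (flip x i) 1 = true)) ∧
    elemTrans f a b ∧ (0 : Fin 4) ∈ U f a ∧ (1 : Fin 4) ∈ U f a ∧
    ¬ asyncReach f a b ∧ nonSeq f a b := by
  intro f a b
  have hclosed : ∀ x : Config 4, (x 0 = true ∨ x 1 = true) → ∀ i, unstable f x i →
      ((flip x i) 0 = true ∨ (flip x i) 1 = true) := by unfold unstable; decide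
  have hinv : ∀ y, asyncReach f a y → (y 0 = true ∨ y 1 = true) := by
    intro y hy
    induction hy with
    | refl => left; rfl
    | tail _ step ih =>
        obtain ⟨i, hi, rfl⟩ := step
        exact hclosed _ ih i hi
  have hnotreach : ¬ asyncReach f a b := by
    intro hab
    have := hinv b hab
    simp [b, Matrix.cons_val_zero, Matrix.cons_val_one] at this
  have hcard : (diff a b).card = 2 := by decide
  refine ⟨by decide, hclosed, by unfold elemTrans; decide, by decide, by decide, hnotreach, by unfold elemTrans; decide, ?_, ?_⟩
  · rw [hcard]
  · rintro ⟨l, hchain, hhead, hlast⟩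
    apply hnotreach
    refine chain'_reach l ?_ a b hhead hlast
    refine hchain.imp ?_
    rintro u v ⟨he, hlt⟩
    exact asyncStep_of_elem_card_le_one he (by rw [hcard] at hlt; omega)

end BAN
end

section
/- Let N be a monotone Boolean automata network of size n in which no cycle of the signed interaction graph of length at most m is critical (i.e., x-critical for some x). Then every synchronous elementary transition x ⇒ y of size |Δ(x,y)| ≤ m is totally sequentialisable into a chain of asynchronous transitions from x to y. -/
namespace BAN

/-! ### Auxiliary lemmas for Statement 17 -/

/-- If every element of a nonempty finset has an `R`-successor in the finset,
then there is a cycle (with pairwise distinct vertices) inside the finset. -/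
lemma exists_cycle {n : ℕ} (S : Finset (Fin n)) (R : Fin n → Fin n → Prop)
    (hne : S.Nonempty) (hstep : ∀ i ∈ S, ∃ j ∈ S, R i j) :
    ∃ (ℓ : ℕ) (c : Fin ℓ → Fin n), 0 < ℓ ∧ ℓ ≤ S.card ∧
      Function.Injective c ∧ (∀ k, c k ∈ S) ∧ ∀ k, R (c k) (c (cnext k)) := by
  classical
  obtain ⟨i0, hi0⟩ := hne
  have hstep' : ∀ a : {i // i ∈ S}, ∃ b : {i // i ∈ S}, R a.1 b.1 := fun a => by
    obtain ⟨j, hj, hr⟩ := hstep a.1 a.2; exact ⟨⟨j, hj⟩, hr⟩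
  choose nxt hnxt using hstep'
  set g : ℕ → {i // i ∈ S} := fun k => nxt^[k] ⟨i0, hi0⟩ with hgdef
  have hg : ∀ k, R (g k).1 (g (k+1)).1 := by
    intro k
    have hgk : g (k+1) = nxt (g k) := Function.iterate_succ_apply' nxt k _
    rw [hgk]; exact hnxt _
  obtain ⟨u, v, huv, hguv⟩ := Finite.exists_ne_map_eq_of_infinite g
  have hP : ∃ b, ∃ a, a < b ∧ g a = g b := by
    rcases lt_or_gt_of_ne huv with h | h
    · exact ⟨v, u, h, hguv⟩
    · exact ⟨u, v, h, hguv.symm⟩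
  let b := Nat.find hP
  obtain ⟨a, hab, hgab⟩ : ∃ a, a < b ∧ g a = g b := Nat.find_spec hP
  have hmin : ∀ v < b, ¬ ∃ a, a < v ∧ g a = g v := fun v hv => Nat.find_min hP hv
  have hinj : ∀ u v, u < v → v < b → g u ≠ g v := by
    intro u v huv hvb h
    exact hmin v hvb ⟨u, huv, h⟩
  set ℓ := b - a with hl
  have hlpos : 0 < ℓ := Nat.sub_pos_of_lt hab
  have hba : b = a + ℓ := by omega
  refine ⟨ℓ, fun k => (g (a + k.1)).1, hlpos, ?_, ?_, fun k => (g (a + k.1)).2, ?_⟩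
  · -- ℓ ≤ S.card
    have hinj2 : Function.Injective (fun k : Fin ℓ => g (a + k.1)) := by
      intro k1 k2 h
      have hk1 : a + k1.1 < b := by omega
      have hk2 : a + k2.1 < b := by omega
      by_contra hne
      have : a + k1.1 ≠ a + k2.1 := by
        intro h'; exact hne (Fin.ext (by omega))
      rcases lt_or_gt_of_ne this with h' | h'
      · exact hinj _ _ h' hk2 h
      · exact hinj _ _ h' hk1 h.symm
    calc ℓ = Fintype.card (Fin ℓ) := (Fintype.card_fin ℓ).symm
      _ ≤ Fintype.card {i // i ∈ S} := Fintype.card_le_of_injective _ hinj2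
      _ = S.card := Fintype.card_coe S
  · -- injectivity of c
    intro k1 k2 h
    have hk1 : a + k1.1 < b := by omega
    have hk2 : a + k2.1 < b := by omega
    have h' : g (a + k1.1) = g (a + k2.1) := Subtype.ext h
    by_contra hne
    have : a + k1.1 ≠ a + k2.1 := by
      intro h''; exact hne (Fin.ext (by omega))
    rcases lt_or_gt_of_ne this with h'' | h''
    · exact hinj _ _ h'' hk2 h'
    · exact hinj _ _ h'' hk1 h'.symm
  · -- cycle edges
    intro k
    have hk : k.1 < ℓ := k.2
    show R (g (a + k.1)).1 (g (a + (cnext k).1)).1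
    rcases Nat.lt_or_ge (k.1 + 1) ℓ with h | h
    · have hcv : (cnext k).1 = k.1 + 1 := by
        simp [cnext, Nat.mod_eq_of_lt h]
      rw [hcv]
      have := hg (a + k.1)
      simpa [Nat.add_assoc] using this
    · have hkeq : k.1 + 1 = ℓ := by omega
      have hcv : (cnext k).1 = 0 := by
        simp [cnext, hkeq]
      rw [hcv]
      have h1 := hg (a + k.1)
      have h2 : a + k.1 + 1 = b := by omega
      rw [h2, ← hgab] at h1
      simpa using h1

/-- Topological sort: if every nonempty subset of `S` has an `R`-sink,
then `S` can be listed so that no earlier element `R`-points to a later one. -/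
lemma topo_sort_s17 {n : ℕ} (R : Fin n → Fin n → Prop) (S : Finset (Fin n)) :
    (∀ T ⊆ S, T.Nonempty → ∃ i ∈ T, ∀ j ∈ T, ¬ R i j) →
    ∃ l : List (Fin n), l.Nodup ∧ l.toFinset = S ∧ l.Pairwise (fun a b => ¬ R a b) := by
  classical
  induction S using Finset.strongInduction with
  | _ S ih =>
    intro hsink
    rcases S.eq_empty_or_nonempty with rfl | hne
    · exact ⟨[], by simp, by simp, by simp⟩
    · obtain ⟨i, hiS, hi⟩ := hsink S subset_rfl hne
      obtain ⟨l, hnd, htf, hpw⟩ := ih (S.erase i) (Finset.erase_ssubset hiS)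
        (fun T hT hTne => hsink T (hT.trans (Finset.erase_subset _ _)) hTne)
      refine ⟨i :: l, ?_, ?_, ?_⟩
      · refine List.Nodup.cons (fun h => ?_) hnd
        have : i ∈ S.erase i := htf ▸ List.mem_toFinset.2 h
        exact (Finset.notMem_erase i S) this
      · simp only [List.toFinset_cons, htf, Finset.insert_erase hiS]
      · exact List.Pairwise.cons
          (fun j hj => hi j (Finset.mem_of_mem_erase (htf ▸ List.mem_toFinset.2 hj))) hpw

/-- Flipping a non-frustrated coordinate preserves instability. -/
lemma step_lemma {n : ℕ} (f : Net n) (hmono : MonotoneNet f) (x z : Config n)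
    (j i : Fin n) (hzj : z j = x j) (hzi : z i = x i)
    (hunst : f i z ≠ x i) (hnf : ¬ frustrated f x j i) :
    f i (flip z j) ≠ x i := by
  intro heq
  have hneq : f i z ≠ f i (flip z j) := by rw [heq]; exact hunst
  have harc : arc f j i := ⟨z, hneq⟩
  have hzi' : z i = f i (flip z j) := by rw [heq, hzi]
  rcases hmono i j with hp | hn
  · apply hnf
    refine ⟨1, ⟨harc, Or.inl ⟨rfl, hp⟩⟩, ?_⟩
    have h := hp z
    rw [← hzj, ← hzi]
    rcases Bool.eq_false_or_eq_true (z j) with hj' | hj' <;>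
    rcases Bool.eq_false_or_eq_true (f i z) with h1 | h1 <;>
    rcases Bool.eq_false_or_eq_true (f i (flip z j)) with h2 | h2 <;>
      simp_all [sgn, bint] <;> omega
  · apply hnf
    refine ⟨-1, ⟨harc, Or.inr ⟨rfl, hn⟩⟩, ?_⟩
    have h := hn z
    rw [← hzj, ← hzi]
    rcases Bool.eq_false_or_eq_true (z j) with hj' | hj' <;>
    rcases Bool.eq_false_or_eq_true (f i z) with h1 | h1 <;>
    rcases Bool.eq_false_or_eq_true (f i (flip z j)) with h2 | h2 <;>
      simp_all [sgn, bint] <;> omega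

/-- Coordinates not in the flipped list are unchanged by the fold. -/
lemma foldl_flip_eq {n : ℕ} (x : Config n) (L : List (Fin n)) (j : Fin n)
    (hj : j ∉ L) : (L.foldl flip x) j = x j := by
  induction L generalizing x with
  | nil => rfl
  | cons a L ih =>
    simp only [List.foldl_cons]
    rw [ih (flip x a) (fun h => hj (List.mem_cons_of_mem a h))]
    have : a ≠ j := fun h => hj (h ▸ (List.mem_cons_self : a ∈ a :: L))
    simp [flip, Function.update_of_ne (Ne.symm this)]

/-- if no cycle of length `≤ m` of the interaction graph is critical,
then every synchronous elementary transition of size `≤ m` is totally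
sequentialisable. -/
theorem stmt17 {n m : ℕ} (f : Net n) (hmono : MonotoneNet f)
    (hnc : ∀ (z : Config n) (ℓ : ℕ) (c : Fin ℓ → Fin n),
      ℓ ≤ m → xCriticalCycle f z c → False)
    (x y : Config n) (ht : elemTrans f x y) (hsync : 2 ≤ (diff x y).card)
    (hle : (diff x y).card ≤ m) :
    totallySeq f x y := by
  classical
  set S := diff x y with hS
  set R : Fin n → Fin n → Prop := fun j i => frustrated f x j i with hR
  -- every nonempty subset of S has a sink in the frustration digraph
  have hsink : ∀ T ⊆ S, T.Nonempty → ∃ i ∈ T, ∀ j ∈ T, ¬ R i j := by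
    intro T hTS hTne
    by_contra hcon
    push_neg at hcon
    obtain ⟨ℓ, c, hlpos, hlcard, hcinj, hcmem, hcedge⟩ := exists_cycle T R hTne hcon
    have hlm : ℓ ≤ m := le_trans hlcard (le_trans (Finset.card_le_card hTS) hle)
    apply hnc x ℓ c hlm
    refine ⟨⟨hlpos, ?_, ?_⟩, ?_, ?_⟩
    · intro k
      obtain ⟨s, ⟨harc, _⟩, _⟩ := hcedge k
      exact harc
    · intro k1 k2 h
      apply hcinj
      have h' : (c k1, c (cnext k1)) = (c k2, c (cnext k2)) := h
      exact congrArg Prod.fst h' 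
    · intro k
      have : c k ∈ U f x := ht.2 (hTS (hcmem k))
      simpa [U, unstable, Finset.mem_filter] using this
    · exact hcedge
  obtain ⟨l, hnd, htf, hpw⟩ := topo_sort_s17 R S hsink
  refine ⟨l, hnd, htf, ?_⟩
  intro t
  -- key invariant: for s ≤ t, the target stays unstable
  have hmemS : ∀ u : Fin l.length, l.get u ∈ S := by
    intro u
    rw [← htf]
    exact List.mem_toFinset.2 (List.get_mem l u)
  have hUx : ∀ u : Fin l.length, f (l.get u) x ≠ x (l.get u) := by
    intro u
    have : l.get u ∈ U f x := ht.2 (hmemS u)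
    simpa [U, unstable, Finset.mem_filter] using this
  have hnotin : ∀ (s : ℕ) (u : Fin l.length), s ≤ u.1 → l.get u ∉ l.take s := by
    intro s u hsu hmem
    obtain ⟨v, hv, hveq⟩ := List.mem_iff_getElem.1 hmem
    have hlt : (l.take s).length = min s l.length := List.length_take
    rw [List.getElem_take] at hveq
    have : v = u.1 := (List.Nodup.getElem_inj_iff hnd).1 (by simpa using hveq)
    omega
  have hpw' : ∀ (u v : Fin l.length), u.1 < v.1 → ¬ R (l.get u) (l.get v) := by
    intro u v huv
    have := List.pairwise_iff_getElem.1 hpw u.1 v.1 u.2 v.2 huv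
    simpa using this
  have key : ∀ s : ℕ, s ≤ t.1 → f (l.get t) ((l.take s).foldl flip x) ≠ x (l.get t) := by
    intro s
    induction s with
    | zero => intro _; simpa using hUx t
    | succ s ihs =>
      intro hst
      have hs1 : s < l.length := lt_of_lt_of_le hst (le_of_lt t.2)
      have hstep : l.take (s+1) = l.take s ++ [l.get ⟨s, hs1⟩] := by
        rw [List.take_succ]
        congr 1
        simp [List.getElem?_eq_getElem hs1]
      rw [hstep, List.foldl_append]
      simp only [List.foldl_cons, List.foldl_nil]
      set z := (l.take s).foldl flip x with hz
      have hzj : z (l.get ⟨s, hs1⟩) = x (l.get ⟨s, hs1⟩) :=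
        foldl_flip_eq x _ _ (hnotin s ⟨s, hs1⟩ le_rfl)
      have hzi : z (l.get t) = x (l.get t) :=
        foldl_flip_eq x _ _ (hnotin s t (by omega))
      exact step_lemma f hmono x z (l.get ⟨s, hs1⟩) (l.get t) hzj hzi
        (ihs (by omega)) (hpw' ⟨s, hs1⟩ t (by simp; omega))
  have hzt : ((l.take t.1).foldl flip x) (l.get t) = x (l.get t) :=
    foldl_flip_eq x _ _ (hnotin t.1 t le_rfl)
  unfold unstable
  rw [hzt]
  exact key t.1 le_rfl

end BAN
end

section
/- Let N be a monotone Boolean automata network whose signed interaction graph contains no cycle that is positive of even length and no cycle that is negative of odd length. Then no cycle of N is critical, and consequently every synchronous elementary transition of N is totally sequentialisable (N has no non-sequentialisable transition). -/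
namespace BAN

section AuxProofs

variable {n : ℕ}

lemma flipSet_apply_not_mem (x : Config n) {S : Finset (Fin n)} {i : Fin n} (h : i ∉ S) :
    flipSet x S i = x i := by simp [flipSet, h]

lemma flip_flipSet (x : Config n) {S : Finset (Fin n)} {a : Fin n} (h : a ∉ S) :
    flip (flipSet x S) a = flipSet x (insert a S) := by
  funext i
  by_cases hia : i = a
  · subst hia; simp [flip, Function.update, flipSet, h]
  · simp [flip, Function.update, hia, flipSet, Finset.mem_insert]

lemma flipSet_flip (x : Config n) {T : Finset (Fin n)} {a : Fin n} (h : a ∉ T) :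
    flipSet (flip x a) T = flipSet x (insert a T) := by
  funext i
  by_cases hia : i = a
  · subst hia; simp [flipSet, flip, Function.update, h]
  · simp [flipSet, flip, Function.update, hia, Finset.mem_insert]

lemma foldl_flip_eq_s19 (x : Config n) (m : List (Fin n)) (hm : m.Nodup) :
    m.foldl flip x = flipSet x m.toFinset := by
  induction m generalizing x with
  | nil => simp [flipSet_empty]
  | cons a m ih =>
      have hnd := hm
      rw [List.nodup_cons] at hnd
      have : (a :: m).foldl flip x = m.foldl flip (flip x a) := rfl
      rw [this, ih (flip x a) hnd.2, List.toFinset_cons]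
      exact flipSet_flip x (by simpa using hnd.1)

/-- If `i` is unstable in `x` but stable in `x` flipped on `S`, there is a
frustrated in-arc of `i` from some `j ∈ S`. -/
lemma exists_frustrated_source (f : Net n) (hmono : MonotoneNet f) (x : Config n) (i : Fin n)
    (h1 : f i x ≠ x i) :
    ∀ S : Finset (Fin n), f i (flipSet x S) = x i → ∃ j ∈ S, frustrated f x j i := by
  intro S
  induction S using Finset.strongInduction with
  | _ S ih =>
    intro h2
    have hSne : S.Nonempty := by
      rcases S.eq_empty_or_nonempty with h | h
      · subst h; rw [flipSet_empty] at h2; exact absurd h2 h1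
      · exact h
    obtain ⟨j, hj⟩ := hSne
    by_cases hT : f i (flipSet x (S.erase j)) = x i
    · obtain ⟨j', hj', hfr⟩ := ih (S.erase j) (Finset.erase_ssubset hj) hT
      exact ⟨j', Finset.mem_of_mem_erase hj', hfr⟩
    · set w := flipSet x (S.erase j) with hw
      have hwj : w j = x j := flipSet_apply_not_mem x (Finset.notMem_erase j S)
      have hflip : flip w j = flipSet x S := by
        rw [hw, flip_flipSet x (Finset.notMem_erase j S), Finset.insert_erase hj]
      have hfw : f i w = !(x i) := by
        cases hxw : f i w <;> cases hxi : x i <;> simp_all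
      have hfl : f i (flip w j) = x i := by rw [hflip]; exact h2
      have harc : arc f j i := ⟨w, by rw [hfw, hfl]; cases x i <;> simp⟩
      rcases hmono i j with hp | hn
      · refine ⟨j, hj, 1, ⟨harc, Or.inl ⟨rfl, hp⟩⟩, ?_⟩
        have hineq := hp w
        rw [hfw, hfl] at hineq
        cases hxi : x i <;> cases hxj : x j <;>
          simp [hxi, hxj, sgn, bint, hwj] at hineq ⊢
      · refine ⟨j, hj, -1, ⟨harc, Or.inr ⟨rfl, hn⟩⟩, ?_⟩
        have hineq := hn w
        rw [hfw, hfl] at hineq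
        cases hxi : x i <;> cases hxj : x j <;>
          simp [hxi, hxj, sgn, bint, hwj] at hineq ⊢

lemma sgn_mul_sgn_self (b : Bool) : sgn b * sgn b = 1 := by cases b <;> simp [sgn]

lemma cnext_bijective {ℓ : ℕ} : Function.Bijective (cnext (ℓ := ℓ)) := by
  rw [← Finite.injective_iff_bijective]
  intro a b h
  have h' : (a.val + 1) % ℓ = (b.val + 1) % ℓ := congrArg Fin.val h
  have ha := a.isLt
  have hb := b.isLt
  apply Fin.ext
  rcases Nat.lt_or_ge (a.val + 1) ℓ with h1 | h1 <;> rcases Nat.lt_or_ge (b.val + 1) ℓ with h2 | h2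
  · rw [Nat.mod_eq_of_lt h1, Nat.mod_eq_of_lt h2] at h'; omega
  · have hbe : b.val + 1 = ℓ := by omega
    rw [Nat.mod_eq_of_lt h1, hbe, Nat.mod_self] at h'; omega
  · have hae : a.val + 1 = ℓ := by omega
    rw [hae, Nat.mod_self, Nat.mod_eq_of_lt h2] at h'; omega
  · omega

lemma no_crit {n : ℕ} (f : Net n)
    (hnocyc : ∀ (ℓ : ℕ) (c : Fin ℓ → Fin n) (σ : Fin ℓ → ℤ),
      isCycle f c → (∀ k, hasSign f (c k) (c (cnext k)) (σ k)) →
      ¬ ((∏ k, σ k) = 1 ∧ Even ℓ) ∧ ¬ ((∏ k, σ k) = -1 ∧ Odd ℓ)) :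
    ∀ (x : Config n) (ℓ : ℕ) (c : Fin ℓ → Fin n), ¬ xCriticalCycle f x c := by
  rintro x ℓ c ⟨hcyc, hun, hfr⟩
  choose σ hσ hval using hfr
  obtain ⟨h1, h2⟩ := hnocyc ℓ c σ hcyc hσ
  have hσval : ∀ k, σ k = -(sgn (x (c k)) * sgn (x (c (cnext k)))) := by
    intro k; have := hval k; linarith
  have hprod : (∏ k, σ k) = (-1 : ℤ) ^ ℓ := by
    calc (∏ k, σ k) = ∏ k, (-1 : ℤ) * (sgn (x (c k)) * sgn (x (c (cnext k)))) := by
          refine Finset.prod_congr rfl fun k _ => ?_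
          rw [hσval k]; ring
      _ = ((-1 : ℤ) ^ ℓ) * ((∏ k, sgn (x (c k))) * (∏ k, sgn (x (c (cnext k))))) := by
          rw [Finset.prod_mul_distrib, Finset.prod_mul_distrib, Finset.prod_const]
          simp [Finset.card_univ]
      _ = (-1 : ℤ) ^ ℓ := by
          rw [show (∏ k, sgn (x (c (cnext k)))) = ∏ k, sgn (x (c k)) from
            Fintype.prod_bijective _ cnext_bijective _ _ (fun k => rfl)]
          rw [← Finset.prod_mul_distrib]
          simp [sgn_mul_sgn_self]
  rcases Nat.even_or_odd ℓ with he | ho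
  · exact h1 ⟨by rw [hprod, he.neg_one_pow], he⟩
  · exact h2 ⟨by rw [hprod, ho.neg_one_pow], ho⟩

/-- In a set of unstable nodes containing no critical cycle there is a node with
no frustrated out-arc inside the set. -/
lemma exists_sink {n : ℕ} (f : Net n) (x : Config n)
    (hnc : ∀ (ℓ : ℕ) (c : Fin ℓ → Fin n), ¬ xCriticalCycle f x c)
    (Δ : Finset (Fin n)) (hΔ : ∀ i ∈ Δ, unstable f x i) (hne : Δ.Nonempty) :
    ∃ i ∈ Δ, ∀ k ∈ Δ, ¬ frustrated f x i k := by
  classical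
  by_contra hcon
  push_neg at hcon
  have hg : ∀ i : Fin n, ∃ k : Fin n, i ∈ Δ → (k ∈ Δ ∧ frustrated f x i k) := by
    intro i
    by_cases hi : i ∈ Δ
    · obtain ⟨k, hk1, hk2⟩ := hcon i hi
      exact ⟨k, fun _ => ⟨hk1, hk2⟩⟩
    · exact ⟨i, fun h => absurd h hi⟩
  choose g hgspec using hg
  obtain ⟨i0, hi0⟩ := hne
  set u : ℕ → Fin n := fun m => g^[m] i0 with hu
  have humem : ∀ m, u m ∈ Δ := by
    intro m
    induction m with
    | zero => exact hi0
    | succ m ihm =>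
        have : u (m + 1) = g (u m) := Function.iterate_succ_apply' g m i0
        rw [this]; exact (hgspec _ ihm).1
  have hufr : ∀ m, frustrated f x (u m) (u (m + 1)) := by
    intro m
    have : u (m + 1) = g (u m) := Function.iterate_succ_apply' g m i0
    rw [this]; exact (hgspec _ (humem m)).2
  have hB : ∃ b, ∃ a < b, u a = u b := by
    obtain ⟨a, b, hab, h⟩ := Finite.exists_ne_map_eq_of_infinite u
    rcases Nat.lt_or_ge a b with h' | h'
    · exact ⟨b, a, h', h⟩
    · exact ⟨a, b, by omega, h.symm⟩
  set b := Nat.find hB with hbdef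
  obtain ⟨a, hab, hua⟩ := Nat.find_spec hB
  have key : ∀ s t : ℕ, s < t → t < b → u s ≠ u t := by
    intro s t hst htb heq
    exact Nat.find_min hB htb ⟨s, hst, heq⟩
  set ℓ := b - a with hl
  have hlpos : 0 < ℓ := by omega
  set c : Fin ℓ → Fin n := fun k => u (a + k.val) with hc
  have hstep : ∀ k : Fin ℓ, c (cnext k) = u (a + k.val + 1) := by
    intro k
    rcases Nat.lt_or_ge (k.val + 1) ℓ with h' | h'
    · have hck : cnext k = ⟨k.val + 1, h'⟩ := by
        apply Fin.ext; simp [cnext, Nat.mod_eq_of_lt h']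
      rw [hck]
      rfl
    · have hk1 : k.val + 1 = ℓ := by omega
      have hck : cnext k = ⟨0, hlpos⟩ := by
        apply Fin.ext; simp [cnext, hk1]
      rw [hck]
      show u (a + 0) = u (a + k.val + 1)
      have hb' : a + k.val + 1 = b := by omega
      rw [hb', Nat.add_zero]
      exact hua
  have hcinj : Function.Injective c := by
    intro k k' h
    apply Fin.ext
    by_contra hne'
    rcases Nat.lt_or_ge k.val k'.val with hlt | hge
    · exact key (a + k.val) (a + k'.val) (by omega) (by have := k'.isLt; omega) h
    · have hlt : k'.val < k.val := by omega
      exact key (a + k'.val) (a + k.val) (by omega) (by have := k.isLt; omega) h.symm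
  have hfrc : ∀ k : Fin ℓ, frustrated f x (c k) (c (cnext k)) := by
    intro k
    rw [hstep k]
    exact hufr (a + k.val)
  have harc : ∀ k : Fin ℓ, arc f (c k) (c (cnext k)) := by
    intro k
    obtain ⟨s, hs, -⟩ := hfrc k
    exact hs.1
  have hinj2 : Function.Injective (fun k : Fin ℓ => (c k, c (cnext k))) := by
    intro k k' h
    exact hcinj (congrArg Prod.fst h)
  exact hnc ℓ c ⟨⟨hlpos, harc, hinj2⟩, fun k => hΔ _ (humem _), hfrc⟩

lemma topo {n : ℕ} (f : Net n) (x : Config n)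
    (hnc : ∀ (ℓ : ℕ) (c : Fin ℓ → Fin n), ¬ xCriticalCycle f x c) :
    ∀ (Δ : Finset (Fin n)), (∀ i ∈ Δ, unstable f x i) →
      ∃ l : List (Fin n), l.Nodup ∧ l.toFinset = Δ ∧
        l.Pairwise (fun j i => ¬ frustrated f x j i) := by
  intro Δ
  induction Δ using Finset.strongInduction with
  | _ Δ ih =>
    intro hΔ
    rcases Δ.eq_empty_or_nonempty with hem | hne
    · exact ⟨[], by simp [hem]⟩
    · obtain ⟨i, hiΔ, hi⟩ := exists_sink f x hnc Δ hΔ hne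
      obtain ⟨l, hnd, htf, hpw⟩ := ih (Δ.erase i) (Finset.erase_ssubset hiΔ)
        (fun j hj => hΔ j (Finset.mem_of_mem_erase hj))
      refine ⟨i :: l, ?_, ?_, ?_⟩
      · rw [List.nodup_cons]
        refine ⟨fun hmem => ?_, hnd⟩
        have : i ∈ Δ.erase i := htf ▸ List.mem_toFinset.mpr hmem
        exact (Finset.notMem_erase i Δ) this
      · rw [List.toFinset_cons, htf, Finset.insert_erase hiΔ]
      · refine List.pairwise_cons.mpr ⟨fun b hb => ?_, hpw⟩
        exact hi b (Finset.mem_of_mem_erase (htf ▸ List.mem_toFinset.mpr hb))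

end AuxProofs

/-- if the signed interaction graph has no positive cycle of even length
and no negative cycle of odd length, then no cycle is critical and every synchronous
elementary transition is totally sequentialisable. -/
theorem stmt19 {n : ℕ} (f : Net n) (hmono : MonotoneNet f)
    (hnocyc : ∀ (ℓ : ℕ) (c : Fin ℓ → Fin n) (σ : Fin ℓ → ℤ),
      isCycle f c → (∀ k, hasSign f (c k) (c (cnext k)) (σ k)) →
      ¬ ((∏ k, σ k) = 1 ∧ Even ℓ) ∧ ¬ ((∏ k, σ k) = -1 ∧ Odd ℓ)) :
    (∀ (x : Config n) (ℓ : ℕ) (c : Fin ℓ → Fin n), ¬ xCriticalCycle f x c) ∧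
    (∀ x y, elemTrans f x y → 2 ≤ (diff x y).card → totallySeq f x y) := by
  classical
  have hnc : ∀ (x : Config n) (ℓ : ℕ) (c : Fin ℓ → Fin n), ¬ xCriticalCycle f x c :=
    no_crit f hnocyc
  refine ⟨hnc, ?_⟩
  rintro x y ⟨hne, hsub⟩ -
  have hΔ : ∀ i ∈ diff x y, unstable f x i := by
    intro i hi
    have := hsub hi
    simpa [U, unstable] using this
  obtain ⟨l, hnd, htf, hpw⟩ := topo f x (hnc x) (diff x y) hΔ
  refine ⟨l, hnd, htf, ?_⟩
  intro t
  have hiΔ : l.get t ∈ diff x y := htf ▸ List.mem_toFinset.mpr (l.get_mem t)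
  have hndtake : (l.take t.val).Nodup := (List.take_sublist _ _).nodup hnd
  rw [foldl_flip_eq_s19 x _ hndtake]
  have hiS : l.get t ∉ (l.take t.val).toFinset := by
    rw [List.mem_toFinset]
    intro hmem
    obtain ⟨s, hgs⟩ := List.mem_iff_get.mp hmem
    have hslt : s.val < t.val := by
      have := s.isLt
      simp [List.length_take] at this
      omega
    have hget : (l.take t.val).get s = l.get ⟨s.val, by have := t.isLt; omega⟩ := by
      simp [List.get_eq_getElem, List.getElem_take]
    rw [hget] at hgs
    have := List.Nodup.get_inj_iff hnd |>.mp hgs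
    have : s.val = t.val := congrArg Fin.val this
    omega
  have hxi : flipSet x (l.take t.val).toFinset (l.get t) = x (l.get t) :=
    flipSet_apply_not_mem x hiS
  have h1 : f (l.get t) x ≠ x (l.get t) := hΔ _ hiΔ
  intro hstable
  rw [hxi] at hstable
  obtain ⟨j, hjS, hfr⟩ := exists_frustrated_source f hmono x (l.get t) h1 _ hstable
  rw [List.mem_toFinset] at hjS
  obtain ⟨s, hgs⟩ := List.mem_iff_get.mp hjS
  have hslt : s.val < t.val := by
    have := s.isLt
    simp [List.length_take] at this
    omega
  have hget : (l.take t.val).get s = l.get ⟨s.val, by have := t.isLt; omega⟩ := by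
    simp [List.get_eq_getElem, List.getElem_take]
  rw [hget] at hgs
  have hnofr := (List.pairwise_iff_get.mp hpw) ⟨s.val, by have := t.isLt; omega⟩ t (by
    simp [Fin.lt_def]; omega)
  rw [hgs] at hnofr
  exact hnofr hfr


end BAN
end
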